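/- Let d ≥ 1, s ∈ ℕ, p, r ∈ ℕ^d, and let a_{ℓ,σ} be real numbers indexed by multi-integers ℓ ∈ ℤ^d with −r ≤ ℓ ≤ p (componentwise) and σ = 0,…,s+1. For κ ∈ (ℂ\{0})^d set Q̂_σ(κ) := Σ_{−r≤ℓ≤p} a_{ℓ,σ}·κ^ℓ, where κ^ℓ := κ₁^{ℓ₁}⋯κ_d^{ℓ_d}. Assume that for every κ with |κ₁| = ⋯ = |κ_d| = 1: Q̂_{s+1}(κ) ≠ 0, every root z ∈ ℂ of the dispersion relation Σ_{σ=0}^{s+1} Q̂_σ(κ)·z^σ = 0 satisfies |z| ≤ 1, and every such root with |z| = 1 is a simple root. Then for every κ with |κ₁| = ⋯ = |κ_d| = 1 and every z ∈ ℂ with |z| ≥ 1, one has Σ_{σ=1}^{s+1} σ·Q̂_σ(κ)·z^{σ−1} ≠ 0. -/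

import Mathlib

/-- The symbol `Q̂_σ(κ) = Σ_{−r≤ℓ≤p} a_{ℓ,σ} κ^ℓ` of the finite difference operator
`Q_σ`, for `κ ∈ (ℂ∖{0})^d`. -/
noncomputable def Qhat (d : ℕ) (p r : Fin d → ℕ) (a : (Fin d → ℤ) → ℕ → ℝ) (σ : ℕ)
    (κ : Fin d → ℂ) : ℂ :=
  ∑ ℓ ∈ Finset.Icc (fun i => -(r i : ℤ)) (fun i => (p i : ℤ)),
    (a ℓ σ : ℂ) * ∏ i : Fin d, κ i ^ (ℓ i)

open Polynomial Complex

/-- A multiset of positive reals has positive sum if nonempty. -/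
lemma aux_msum_pos (m : Multiset ℝ) (hm : m ≠ 0) (h : ∀ x ∈ m, 0 < x) : 0 < m.sum := by
  induction m using Multiset.induction_on with
  | empty => exact absurd rfl hm
  | cons x t ih =>
    rcases eq_or_ne t 0 with rfl | ht
    · simpa using h x (Multiset.mem_cons_self x 0)
    · have := ih ht (fun y hy => h y (Multiset.mem_cons_of_mem hy))
      have hx := h x (Multiset.mem_cons_self x t)
      simp only [Multiset.sum_cons]; linarith

/-- Real part of a multiset sum. -/
lemma aux_re_msum (M : Multiset ℂ) : M.sum.re = (M.map Complex.re).sum := by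
  induction M using Multiset.induction_on with
  | empty => simp
  | cons x t ih => simp [Complex.add_re, ih]

/-- Logarithmic derivative formula for a product of linear factors. -/
lemma aux_deriv_eval (z : ℂ) (m : Multiset ℂ) (h : ∀ x ∈ m, z - x ≠ 0) :
    eval z (derivative (m.map (fun x => X - C x)).prod) =
      eval z (m.map (fun x => X - C x)).prod * (m.map (fun x => (z - x)⁻¹)).sum := by
  induction m using Multiset.induction_on with
  | empty => simp
  | cons x t ih =>
    have hx : z - x ≠ 0 := h x (Multiset.mem_cons_self x t)
    simp only [Multiset.map_cons, Multiset.prod_cons, Multiset.sum_cons, derivative_mul,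
      derivative_sub, derivative_X, derivative_C, sub_zero, eval_add, eval_mul, eval_sub,
      eval_X, eval_C, eval_one, one_mul]
    rw [ih (fun y hy => h y (Multiset.mem_cons_of_mem hy))]
    field_simp

/-- The key pointwise estimate: `Re (z/(z−x)) > 0` when `|z| ≥ 1 ≥ |x|` and `z ≠ x`. -/
lemma aux_term {z x : ℂ} (hz : 1 ≤ ‖z‖) (hx : ‖x‖ ≤ 1) (hne : z ≠ x) :
    0 < (z * (z - x)⁻¹).re := by
  have hw : z - x ≠ 0 := sub_ne_zero.mpr hne
  have h1 : (z * (z - x)⁻¹).re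
      = (Complex.normSq z - (z * (starRingEnd ℂ) x).re) / Complex.normSq (z - x) := by
    rw [← div_eq_mul_inv, Complex.div_re]
    simp [Complex.normSq_apply, Complex.mul_re, Complex.conj_re, Complex.conj_im]
    ring
  rw [h1]
  apply div_pos _ (Complex.normSq_pos.mpr hw)
  have h2 : (z * (starRingEnd ℂ) x).re ≤ ‖z‖ * ‖x‖ :=
    (Complex.re_le_norm _).trans (by rw [norm_mul, Complex.norm_conj])
  have hnz : Complex.normSq z = ‖z‖ ^ 2 := (Complex.sq_norm z).symm
  rcases hz.lt_or_eq with hlt | heq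
  · nlinarith [norm_nonneg x]
  · rw [hnz, ← heq]
    by_contra hcon
    push_neg at hcon
    have hre : (z * (starRingEnd ℂ) x).re = 1 := by nlinarith
    have habsw : ‖z * (starRingEnd ℂ) x‖ = ‖x‖ := by
      rw [norm_mul, Complex.norm_conj, ← heq, one_mul]
    have hxabs : ‖x‖ = 1 := by
      have := Complex.re_le_norm (z * (starRingEnd ℂ) x)
      rw [hre, habsw] at this
      linarith
    have him : (z * (starRingEnd ℂ) x).im = 0 := by
      have hns : Complex.normSq (z * (starRingEnd ℂ) x) = 1 := by
        rw [← Complex.sq_norm, habsw, hxabs]; norm_num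
      rw [Complex.normSq_apply, hre] at hns
      nlinarith
    have hw1 : z * (starRingEnd ℂ) x = 1 := by
      apply Complex.ext <;> simp [hre, him]
    have hzz : z * (starRingEnd ℂ) z = 1 := by
      rw [Complex.mul_conj, ← Complex.sq_norm, ← heq]; norm_num
    have hz0 : z ≠ 0 := by
      intro h0; rw [h0, norm_zero] at hz; norm_num at hz
    have : (starRingEnd ℂ) x = (starRingEnd ℂ) z :=
      mul_left_cancel₀ hz0 (hw1.trans hzz.symm)
    exact hne (star_injective (R := ℂ) this).symm

/-- if for every `κ` on the `d`-torus the leading symbol `Q̂_{s+1}(κ)`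
does not vanish, every root `z` of the dispersion relation
`Σ_{σ=0}^{s+1} Q̂_σ(κ) z^σ = 0` satisfies `|z| ≤ 1`, and every such root with
`|z| = 1` is simple, then `Σ_{σ=1}^{s+1} σ Q̂_σ(κ) z^{σ−1} ≠ 0` for every `κ` on
the torus and every `z` with `|z| ≥ 1`. -/
theorem stmt_6 (d : ℕ) (hd : 1 ≤ d) (s : ℕ) (p r : Fin d → ℕ)
    (a : (Fin d → ℤ) → ℕ → ℝ)
    (hlead : ∀ κ : Fin d → ℂ, (∀ i, ‖κ i‖ = 1) →
      Qhat d p r a (s + 1) κ ≠ 0)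
    (hroots : ∀ κ : Fin d → ℂ, (∀ i, ‖κ i‖ = 1) →
      ∀ z : ℂ, (∑ σ ∈ Finset.range (s + 2), Qhat d p r a σ κ * z ^ σ) = 0 →
        ‖z‖ ≤ 1)
    (hsimple : ∀ κ : Fin d → ℂ, (∀ i, ‖κ i‖ = 1) →
      ∀ z : ℂ, (∑ σ ∈ Finset.range (s + 2), Qhat d p r a σ κ * z ^ σ) = 0 →
        ‖z‖ = 1 →
        (∑ σ ∈ Finset.Icc 1 (s + 1), (σ : ℂ) * Qhat d p r a σ κ * z ^ (σ - 1)) ≠ 0) :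
    ∀ κ : Fin d → ℂ, (∀ i, ‖κ i‖ = 1) →
      ∀ z : ℂ, 1 ≤ ‖z‖ →
        (∑ σ ∈ Finset.Icc 1 (s + 1), (σ : ℂ) * Qhat d p r a σ κ * z ^ (σ - 1)) ≠ 0 := by
  intro κ hκ z hz
  set c : ℕ → ℂ := fun σ => Qhat d p r a σ κ with hc
  by_cases hPz : (∑ σ ∈ Finset.range (s + 2), c σ * z ^ σ) = 0
  · exact hsimple κ hκ z hPz (le_antisymm (hroots κ hκ z hPz) hz)
  · -- z is not a root of the dispersion polynomial
    set P : ℂ[X] := ∑ σ ∈ Finset.range (s + 2), Polynomial.C (c σ) * X ^ σ with hPdef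
    have hcoeff : ∀ n, P.coeff n = if n ∈ Finset.range (s + 2) then c n else 0 := by
      intro n
      rw [hPdef, Polynomial.finset_sum_coeff]
      simp only [Polynomial.coeff_C_mul, Polynomial.coeff_X_pow, mul_ite, mul_one, mul_zero]
      rw [Finset.sum_ite_eq (Finset.range (s + 2)) n c]
    have hctop : P.coeff (s + 1) = c (s + 1) := by
      rw [hcoeff]; simp
    have hcne : c (s + 1) ≠ 0 := hlead κ hκ
    have hP0 : P ≠ 0 := fun h => hcne (by rw [← hctop, h, Polynomial.coeff_zero])
    have hdegle : P.natDegree ≤ s + 1 := by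
      apply Polynomial.natDegree_le_iff_coeff_eq_zero.mpr
      intro N hN
      rw [hcoeff]
      simp only [Finset.mem_range, ite_eq_right_iff]
      omega
    have hdeg : P.natDegree = s + 1 :=
      le_antisymm hdegle (Polynomial.le_natDegree_of_ne_zero (hctop ▸ hcne))
    have hevalP : ∀ w : ℂ, P.eval w = ∑ σ ∈ Finset.range (s + 2), c σ * w ^ σ := by
      intro w
      rw [hPdef, Polynomial.eval_finset_sum]
      simp
    have hsplit : P.Splits := IsAlgClosed.splits P
    have hfact := hsplit.eq_prod_roots
    have hcard : Multiset.card P.roots = s + 1 := by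
      rw [Polynomial.splits_iff_card_roots.mp hsplit, hdeg]
    have hzr : ∀ x ∈ P.roots, z - x ≠ 0 := by
      intro x hx hzx
      have hxr : P.eval x = 0 := Polynomial.isRoot_of_mem_roots hx
      apply hPz
      rw [← hevalP z, (sub_eq_zero.mp hzx), hxr]
    have hxabs : ∀ x ∈ P.roots, ‖x‖ ≤ 1 := by
      intro x hx
      have hxr : P.eval x = 0 := Polynomial.isRoot_of_mem_roots hx
      exact hroots κ hκ x (by rw [← hevalP x, hxr])
    -- the goal sum is the evaluation of the derivative of `P` at `z`
    have hsub : Finset.Icc 1 (s + 1) ⊆ Finset.range (s + 2) := by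
      intro x hx
      rw [Finset.mem_Icc] at hx
      rw [Finset.mem_range]
      omega
    have hgoal : (∑ σ ∈ Finset.Icc 1 (s + 1), (σ : ℂ) * c σ * z ^ (σ - 1))
        = eval z (derivative P) := by
      rw [hPdef, derivative_sum]
      simp only [derivative_C_mul, derivative_X_pow]
      rw [Polynomial.eval_finset_sum]
      simp only [eval_mul, eval_C, eval_natCast, eval_pow, eval_X]
      rw [Finset.sum_subset hsub]
      · apply Finset.sum_congr rfl; intro σ _; ring
      · intro x hxr hx
        simp only [Finset.mem_range] at hxr
        simp only [Finset.mem_Icc, not_and, not_le] at hx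
        have : x = 0 := by omega
        simp [this]
    -- derivative evaluation via the factorization
    have hevalfact : P.eval z
        = P.leadingCoeff * eval z (P.roots.map (fun x => X - Polynomial.C x)).prod := by
      conv_lhs => rw [hfact]
      rw [eval_mul, eval_C]
    have hTfact : eval z (derivative P)
        = P.eval z * (P.roots.map (fun x => (z - x)⁻¹)).sum := by
      conv_lhs => rw [hfact]
      rw [derivative_C_mul, eval_mul, eval_C, aux_deriv_eval z P.roots hzr, hevalfact]
      ring
    have hT : (P.roots.map (fun x => (z - x)⁻¹)).sum ≠ 0 := by
      intro hT0
      have hre : (z * (P.roots.map (fun x => (z - x)⁻¹)).sum).re = 0 := by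
        rw [hT0, mul_zero]; rfl
      have hpos : 0 < (z * (P.roots.map (fun x => (z - x)⁻¹)).sum).re := by
        rw [← Multiset.sum_map_mul_left, aux_re_msum, Multiset.map_map]
        apply aux_msum_pos
        · simp only [ne_eq, Multiset.map_eq_zero]
          intro h0
          rw [h0] at hcard
          simp at hcard
        · intro t ht
          rw [Multiset.mem_map] at ht
          obtain ⟨x, hx, rfl⟩ := ht
          exact aux_term hz (hxabs x hx) (fun h => hzr x hx (by rw [h, sub_self]))
      rw [hre] at hpos
      exact lt_irrefl 0 hpos
    rw [hgoal, hTfact]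
    exact mul_ne_zero (by rw [hevalP]; exact hPz) hT
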